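/- For $\theta \ne \tfrac12$, the DG derivative operator $D_{h,\theta}$ maps the mean-zero subspace $Z_h$ into itself and is a bijection on $Z_h$; moreover there is a constant $C$ (independent of $z_h$) such that $\|D_{h,\theta}^{-1} z_h\| \le C \|z_h\|$ for all $z_h \in Z_h$. -/

import Mathlib

open Polynomial

/-- The `L²` inner product of two piecewise polynomials (given cellwise) on the
periodic mesh `x_0 < x_1 < ⋯ < x_{N+1}`, with cell `j = [x_j, x_{j+1}]`. -/
noncomputable def ip (N : ℕ) (xs : ℕ → ℝ) (w v : Fin (N+1) → Polynomial ℝ) : ℝ :=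
  ∑ j : Fin (N+1), ∫ x in (xs j.val)..(xs (j.val + 1)), (w j).eval x * (v j).eval x

/-- Membership in the DG space `V_h` of piecewise polynomials of degree `≤ k`. -/
def memVh (k N : ℕ) (v : Fin (N+1) → Polynomial ℝ) : Prop :=
  ∀ j, (v j).natDegree ≤ k

/-- Left trace `v⁻` at the node `x_{j+1}` (right endpoint of cell `j`). -/
noncomputable def leftT (N : ℕ) (xs : ℕ → ℝ) (v : Fin (N+1) → Polynomial ℝ)
    (j : Fin (N+1)) : ℝ :=
  (v j).eval (xs (j.val + 1))

/-- Right trace `v⁺` at the node `x_{j+1}` (left endpoint of the next cell,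
with periodic wrap-around identifying `x_{N+1}` with `x_0`). -/
noncomputable def rightT (N : ℕ) (xs : ℕ → ℝ) (v : Fin (N+1) → Polynomial ℝ)
    (j : Fin (N+1)) : ℝ :=
  (v (j + 1)).eval (xs ((j + 1 : Fin (N+1)).val))

/-- Jump `[v] = v⁺ - v⁻` at the node following cell `j`. -/
noncomputable def jump (N : ℕ) (xs : ℕ → ℝ) (v : Fin (N+1) → Polynomial ℝ)
    (j : Fin (N+1)) : ℝ :=
  rightT N xs v j - leftT N xs v j

/-- The `θ`-weighted numerical flux `ŵ = θ w⁻ + (1-θ) w⁺`. -/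
noncomputable def flux (N : ℕ) (xs : ℕ → ℝ) (θ : ℝ) (w : Fin (N+1) → Polynomial ℝ)
    (j : Fin (N+1)) : ℝ :=
  θ * leftT N xs w j + (1 - θ) * rightT N xs w j

/-- `DGform k N xs θ w Dw` states that `Dw = D_{h,θ} w`, i.e. `Dw` satisfies the
variational form `⟨D_{h,θ} w, v⟩ = -⟨w, ∂ₓ v⟩ - ∑_j ŵ_{j+1/2} [v]_{j+1/2}` for all
test functions `v` in the DG space. -/
def DGform (k N : ℕ) (xs : ℕ → ℝ) (θ : ℝ) (w Dw : Fin (N+1) → Polynomial ℝ) : Prop :=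
  ∀ v, memVh k N v →
    ip N xs Dw v =
      -(∑ j : Fin (N+1), ∫ x in (xs j.val)..(xs (j.val + 1)),
          (w j).eval x * ((v j).derivative.eval x))
      - ∑ j : Fin (N+1), flux N xs θ w j * jump N xs v j

/-- The mean-zero subspace `Z_h = {v_h ∈ V_h : ⟨v_h, 1⟩ = 0}`. -/
def Zh (k N : ℕ) (xs : ℕ → ℝ) : Set (Fin (N+1) → Polynomial ℝ) :=
  {v | memVh k N v ∧ ip N xs v (fun _ => 1) = 0}


open MeasureTheory intervalIntegral

namespace DGaux

lemma polyII (p : Polynomial ℝ) (a b : ℝ) :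
    IntervalIntegrable (fun x => p.eval x) volume a b :=
  (p.continuous_aeval).intervalIntegrable a b

lemma polyFTC (p : Polynomial ℝ) (a b : ℝ) :
    ∫ x in a..b, p.derivative.eval x = p.eval b - p.eval a := by
  refine integral_eq_sub_of_hasDerivAt (fun x _ => p.hasDerivAt x) (polyII _ a b)

lemma polyIBP (p q : Polynomial ℝ) (a b : ℝ) :
    ∫ x in a..b, p.eval x * q.derivative.eval x
      = p.eval b * q.eval b - p.eval a * q.eval a
        - ∫ x in a..b, p.derivative.eval x * q.eval x := by
  have h := polyFTC (p * q) a b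
  have h2 : ∫ x in a..b, (p*q).derivative.eval x
      = (∫ x in a..b, p.derivative.eval x * q.eval x)
        + ∫ x in a..b, p.eval x * q.derivative.eval x := by
    rw [← intervalIntegral.integral_add]
    · apply intervalIntegral.integral_congr
      intro x _
      simp [Polynomial.derivative_mul]
    · simpa using polyII (p.derivative * q) a b
    · simpa using polyII (p * q.derivative) a b
  rw [h2] at h
  simp only [Polynomial.eval_mul] at h
  linarith

lemma polySelf (p : Polynomial ℝ) (a b : ℝ) :
    ∫ x in a..b, p.eval x * p.derivative.eval x
      = p.eval b * p.eval b / 2 - p.eval a * p.eval a / 2 := by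
  have h := polyIBP p p a b
  have h2 : (∫ x in a..b, p.derivative.eval x * p.eval x)
      = ∫ x in a..b, p.eval x * p.derivative.eval x := by
    apply intervalIntegral.integral_congr; intro x _; ring
  rw [h2] at h; linarith

lemma polyPos (p : Polynomial ℝ) (a b : ℝ) (hab : a < b)
    (h : (∫ x in a..b, p.eval x * p.eval x) = 0) : p = 0 := by
  by_contra hp
  have hroots : (volume {x : ℝ | p.IsRoot x}) = 0 :=
    (Polynomial.finite_setOf_isRoot hp).measure_zero _
  have hnn : ∀ x, 0 ≤ p.eval x * p.eval x := fun x => mul_self_nonneg _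
  have hcont : Continuous fun x => p.eval x * p.eval x :=
    (p.continuous_aeval).mul (p.continuous_aeval)
  rw [intervalIntegral.integral_of_le hab.le] at h
  have hint : IntegrableOn (fun x => p.eval x * p.eval x) (Set.Ioc a b) volume :=
    hcont.integrableOn_Ioc
  have hae : (fun x => p.eval x * p.eval x) =ᵐ[volume.restrict (Set.Ioc a b)] 0 :=
    (integral_eq_zero_iff_of_nonneg (fun x => hnn x) hint).mp h
  have hm : volume ({x : ℝ | p.eval x * p.eval x ≠ 0} ∩ Set.Ioc a b) = 0 := by
    have := ae_iff.mp hae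
    rw [Measure.restrict_apply] at this
    · simpa [Set.inter_comm] using this
    · exact (hcont.measurable (measurableSet_singleton 0).compl : _)
  have hsub : Set.Ioc a b ⊆
      ({x : ℝ | p.eval x * p.eval x ≠ 0} ∩ Set.Ioc a b) ∪ {x : ℝ | p.IsRoot x} := by
    intro x hx
    by_cases hx0 : p.eval x = 0
    · exact Or.inr hx0
    · exact Or.inl ⟨mul_ne_zero hx0 hx0, hx⟩
  have hz : volume (Set.Ioc a b) = 0 := by
    refine le_antisymm ?_ zero_le
    calc volume (Set.Ioc a b) ≤ _ := measure_mono hsub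
    _ ≤ _ := measure_union_le _ _
    _ = 0 := by rw [hm, hroots, add_zero]
  rw [Real.volume_Ioc] at hz
  simp [ENNReal.ofReal_eq_zero, sub_nonpos] at hz
  linarith

variable {N : ℕ} {xs : ℕ → ℝ}

lemma ip_comm (w v : Fin (N+1) → Polynomial ℝ) : ip N xs w v = ip N xs v w := by
  unfold ip; refine Finset.sum_congr rfl fun j _ => ?_
  apply intervalIntegral.integral_congr; intro x _; ring

lemma ip_add_left (w1 w2 v : Fin (N+1) → Polynomial ℝ) :
    ip N xs (w1 + w2) v = ip N xs w1 v + ip N xs w2 v := by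
  unfold ip
  rw [← Finset.sum_add_distrib]
  refine Finset.sum_congr rfl fun j _ => ?_
  rw [← intervalIntegral.integral_add]
  · apply intervalIntegral.integral_congr; intro x _
    simp [Pi.add_apply, Polynomial.eval_add]; ring
  · simpa using polyII (w1 j * v j) _ _
  · simpa using polyII (w2 j * v j) _ _

lemma ip_smul_left (c : ℝ) (w v : Fin (N+1) → Polynomial ℝ) :
    ip N xs (c • w) v = c * ip N xs w v := by
  unfold ip
  rw [Finset.mul_sum]
  refine Finset.sum_congr rfl fun j _ => ?_
  rw [← intervalIntegral.integral_const_mul]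
  apply intervalIntegral.integral_congr; intro x _
  simp [Polynomial.eval_smul, smul_eq_mul]; ring

lemma ip_zero_left (v : Fin (N+1) → Polynomial ℝ) :
    ip N xs (0 : Fin (N+1) → Polynomial ℝ) v = 0 := by
  unfold ip
  refine Finset.sum_eq_zero fun j _ => ?_
  simp

lemma ip_sub_left (w1 w2 v : Fin (N+1) → Polynomial ℝ) :
    ip N xs (w1 - w2) v = ip N xs w1 v - ip N xs w2 v := by
  have h := ip_add_left (xs := xs) (w1 - w2) w2 v
  simp at h; linarith

lemma ip_self_term_nonneg (hxs : StrictMono xs) (v : Fin (N+1) → Polynomial ℝ) (j : Fin (N+1)) :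
    0 ≤ ∫ x in (xs j.val)..(xs (j.val + 1)), (v j).eval x * (v j).eval x := by
  apply intervalIntegral.integral_nonneg (hxs (Nat.lt_succ_self _)).le
  intro x _; exact mul_self_nonneg _

lemma ip_self_nonneg (hxs : StrictMono xs) (v : Fin (N+1) → Polynomial ℝ) :
    0 ≤ ip N xs v v :=
  Finset.sum_nonneg fun j _ => ip_self_term_nonneg hxs v j

lemma ip_self_eq_zero (hxs : StrictMono xs) (v : Fin (N+1) → Polynomial ℝ)
    (h : ip N xs v v = 0) : v = 0 := by
  have hterm := (Finset.sum_eq_zero_iff_of_nonneg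
    (fun j _ => ip_self_term_nonneg hxs v j)).mp h
  funext j
  exact polyPos _ _ _ (hxs (Nat.lt_succ_self _)) (hterm j (Finset.mem_univ j))

lemma memVh_one (k : ℕ) : memVh k N (fun _ => (1 : Polynomial ℝ)) := by
  intro j; simp

lemma memVh_add {k : ℕ} {v w : Fin (N+1) → Polynomial ℝ}
    (hv : memVh k N v) (hw : memVh k N w) : memVh k N (v + w) := fun j =>
  le_trans (Polynomial.natDegree_add_le _ _) (max_le (hv j) (hw j))

lemma memVh_smul {k : ℕ} (c : ℝ) {v : Fin (N+1) → Polynomial ℝ}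
    (hv : memVh k N v) : memVh k N (c • v) := fun j =>
  le_trans (Polynomial.natDegree_smul_le _ _) (hv j)

lemma memVh_sub {k : ℕ} {v w : Fin (N+1) → Polynomial ℝ}
    (hv : memVh k N v) (hw : memVh k N w) : memVh k N (v - w) := fun j =>
  le_trans (Polynomial.natDegree_sub_le _ _) (max_le (hv j) (hw j))

lemma memVh_zero (k : ℕ) : memVh k N (0 : Fin (N+1) → Polynomial ℝ) := by
  intro j; simp

lemma memVh_deriv {k : ℕ} {v : Fin (N+1) → Polynomial ℝ} (hv : memVh k N v) :
    memVh k N (fun j => (v j).derivative) := fun j =>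
  le_trans (Polynomial.natDegree_derivative_le _) (le_trans (Nat.sub_le _ _) (hv j))

lemma Vh_unique (hxs : StrictMono xs) {k : ℕ} {u1 u2 : Fin (N+1) → Polynomial ℝ}
    (h1 : memVh k N u1) (h2 : memVh k N u2)
    (h : ∀ v, memVh k N v → ip N xs u1 v = ip N xs u2 v) : u1 = u2 := by
  have hd := h (u1 - u2) (memVh_sub h1 h2)
  have : ip N xs (u1 - u2) (u1 - u2) = 0 := by
    rw [ip_sub_left]
    linarith
  have := ip_self_eq_zero hxs _ this
  exact sub_eq_zero.mp this


lemma sum_shift (g : Fin (N+1) → ℝ) : ∑ j : Fin (N+1), g (j + 1) = ∑ j : Fin (N+1), g j :=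
  Fintype.sum_equiv (Equiv.addRight (1 : Fin (N+1))) _ _ (fun _ => rfl)

lemma dg_energy {k : ℕ} {θ : ℝ} {w Dw : Fin (N+1) → Polynomial ℝ}
    (hw : memVh k N w) (hform : DGform k N xs θ w Dw) :
    ip N xs Dw w = (θ - 1/2) * ∑ j : Fin (N+1), (jump N xs w j)^2 := by
  have h := hform w hw
  have hsum : (∑ j : Fin (N+1), ∫ x in (xs j.val)..(xs (j.val + 1)),
        (w j).eval x * ((w j).derivative.eval x))
      = (∑ j : Fin (N+1), leftT N xs w j * leftT N xs w j / 2)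
        - ∑ j : Fin (N+1), rightT N xs w j * rightT N xs w j / 2 := by
    have h1 : (∑ j : Fin (N+1), ∫ x in (xs j.val)..(xs (j.val + 1)),
          (w j).eval x * ((w j).derivative.eval x))
        = ∑ j : Fin (N+1), (leftT N xs w j * leftT N xs w j / 2
            - (w j).eval (xs j.val) * (w j).eval (xs j.val) / 2) :=
      Finset.sum_congr rfl fun j _ => polySelf (w j) _ _
    rw [h1, Finset.sum_sub_distrib]
    congr 1
    exact (sum_shift (fun j => (w j).eval (xs j.val) * (w j).eval (xs j.val) / 2)).symm
  rw [hsum] at h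
  rw [h]
  rw [Finset.mul_sum, neg_sub, ← Finset.sum_sub_distrib, ← Finset.sum_sub_distrib]
  refine Finset.sum_congr rfl fun j _ => ?_
  unfold flux jump
  ring


lemma dg_kernel (hxs : StrictMono xs) {k : ℕ} {θ : ℝ} (hθ : θ ≠ 1/2)
    {w : Fin (N+1) → Polynomial ℝ} (hw : memVh k N w)
    (hform : DGform k N xs θ w 0)
    (hmean : ip N xs w (fun _ => 1) = 0) : w = 0 := by
  -- Step 1: jumps vanish
  have hen := dg_energy hw hform
  rw [ip_zero_left] at hen
  have hθ' : θ - 1/2 ≠ 0 := sub_ne_zero.mpr hθ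
  have hsumj : ∑ j : Fin (N+1), (jump N xs w j)^2 = 0 := by
    rcases mul_eq_zero.mp hen.symm with h | h
    · exact absurd h hθ'
    · exact h
  have hjump : ∀ j : Fin (N+1), jump N xs w j = 0 := by
    intro j
    have := (Finset.sum_eq_zero_iff_of_nonneg (fun j _ => sq_nonneg (jump N xs w j))).mp
      hsumj j (Finset.mem_univ j)
    exact pow_eq_zero_iff (two_ne_zero) |>.mp this
  have hRL : ∀ j : Fin (N+1), rightT N xs w j = leftT N xs w j := by
    intro j; have := hjump j; unfold jump at this; linarith
  -- Step 2: the broken derivative of w is L²-orthogonal to Vh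
  have key : ∀ v, memVh k N v →
      (∑ j : Fin (N+1), ∫ x in (xs j.val)..(xs (j.val + 1)),
        ((w j).derivative.eval x) * (v j).eval x) = 0 := by
    intro v hv
    have h := hform v hv
    rw [ip_zero_left] at h
    have hIBP : (∑ j : Fin (N+1), ∫ x in (xs j.val)..(xs (j.val + 1)),
          (w j).eval x * ((v j).derivative.eval x))
        = (∑ j : Fin (N+1), leftT N xs w j * leftT N xs v j)
          - (∑ j : Fin (N+1), (w j).eval (xs j.val) * (v j).eval (xs j.val))
          - ∑ j : Fin (N+1), ∫ x in (xs j.val)..(xs (j.val + 1)),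
              ((w j).derivative.eval x) * (v j).eval x := by
      rw [← Finset.sum_sub_distrib, ← Finset.sum_sub_distrib]
      exact Finset.sum_congr rfl fun j _ => polyIBP (w j) (v j) _ _
    have hB : (∑ j : Fin (N+1), (w j).eval (xs j.val) * (v j).eval (xs j.val))
        = ∑ j : Fin (N+1), leftT N xs w j * rightT N xs v j := by
      rw [← sum_shift (fun j => (w j).eval (xs j.val) * (v j).eval (xs j.val))]
      refine Finset.sum_congr rfl fun j _ => ?_
      have := hRL j
      unfold rightT leftT at this ⊢
      rw [← this]
    have hE : (∑ j : Fin (N+1), flux N xs θ w j * jump N xs v j)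
        = (∑ j : Fin (N+1), leftT N xs w j * rightT N xs v j)
          - ∑ j : Fin (N+1), leftT N xs w j * leftT N xs v j := by
      rw [← Finset.sum_sub_distrib]
      refine Finset.sum_congr rfl fun j _ => ?_
      have := hRL j
      unfold flux jump
      rw [this]
      ring
    rw [hIBP, hE, hB] at h
    linarith
  -- Step 3: the broken derivative vanishes
  have hder : ∀ j : Fin (N+1), (w j).derivative = 0 := by
    have hkey := key (fun j => (w j).derivative) (memVh_deriv hw)
    intro j
    have hterm : (∫ x in (xs j.val)..(xs (j.val + 1)),
        ((w j).derivative.eval x) * ((w j).derivative.eval x)) = 0 := by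
      refine (Finset.sum_eq_zero_iff_of_nonneg (fun j _ => ?_)).mp hkey j (Finset.mem_univ j)
      apply intervalIntegral.integral_nonneg (hxs (Nat.lt_succ_self _)).le
      intro x _; exact mul_self_nonneg _
    exact polyPos _ _ _ (hxs (Nat.lt_succ_self _)) hterm
  -- Step 4: each piece is the same constant
  have hC : ∀ j : Fin (N+1), w j = Polynomial.C ((w j).coeff 0) := by
    intro j
    exact Polynomial.eq_C_of_natDegree_eq_zero
      (Polynomial.natDegree_eq_zero_of_derivative_eq_zero (hder j))
  set c : Fin (N+1) → ℝ := fun j => (w j).coeff 0 with hc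
  have hstep : ∀ j : Fin (N+1), c (j + 1) = c j := by
    intro j
    have := hRL j
    unfold rightT leftT at this
    rw [hC (j+1), hC j] at this
    simpa using this
  have hconst : ∀ j : Fin (N+1), c j = c 0 := by
    open Fin.NatCast in
    have hnat : ∀ m : ℕ, c (m : Fin (N+1)) = c 0 := by
      intro m
      induction m with
      | zero => simp
      | succ n ih =>
        have : ((n+1 : ℕ) : Fin (N+1)) = (n : Fin (N+1)) + 1 := by push_cast; ring
        rw [this, hstep, ih]
    intro j
    have := hnat j.val
    rwa [Fin.cast_val_eq_self] at this
  -- Step 5: mean zero forces the constant to vanish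
  have hmean' : c 0 * (xs (N+1) - xs 0) = 0 := by
    have h1 : ip N xs w (fun _ => 1) = ∑ j : Fin (N+1), c 0 * (xs (j.val + 1) - xs j.val) := by
      unfold ip
      refine Finset.sum_congr rfl fun j _ => ?_
      rw [hC j, show (w j).coeff 0 = c 0 from hconst j]
      simp [mul_comm]
    have h2 : (∑ j : Fin (N+1), c 0 * (xs (j.val + 1) - xs j.val))
        = c 0 * (xs (N+1) - xs 0) := by
      rw [← Finset.mul_sum]
      congr 1
      rw [Fin.sum_univ_eq_sum_range (fun i => xs (i + 1) - xs i)]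
      exact Finset.sum_range_sub xs (N+1)
    rw [h1, h2] at hmean
    exact hmean
  have hx0 : xs (N+1) - xs 0 ≠ 0 := sub_ne_zero.mpr (hxs (Nat.succ_pos N)).ne'
  have hc0 : c 0 = 0 := by
    rcases mul_eq_zero.mp hmean' with h | h
    · exact h
    · exact absurd h hx0
  funext j
  rw [hC j, show (w j).coeff 0 = c 0 from hconst j, hc0]
  simp


noncomputable def dgR (N : ℕ) (xs : ℕ → ℝ) (θ : ℝ) (w v : Fin (N+1) → Polynomial ℝ) : ℝ :=
  -(∑ j : Fin (N+1), ∫ x in (xs j.val)..(xs (j.val + 1)),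
      (w j).eval x * ((v j).derivative.eval x))
  - ∑ j : Fin (N+1), flux N xs θ w j * jump N xs v j

lemma flux_add (θ : ℝ) (w1 w2 : Fin (N+1) → Polynomial ℝ) (j : Fin (N+1)) :
    flux N xs θ (w1 + w2) j = flux N xs θ w1 j + flux N xs θ w2 j := by
  unfold flux leftT rightT
  simp [Pi.add_apply, Polynomial.eval_add]
  ring

lemma flux_smul (θ c : ℝ) (w : Fin (N+1) → Polynomial ℝ) (j : Fin (N+1)) :
    flux N xs θ (c • w) j = c * flux N xs θ w j := by
  unfold flux leftT rightT
  simp [Pi.smul_apply, Polynomial.eval_smul, smul_eq_mul]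
  ring

lemma dgR_add (θ : ℝ) (w1 w2 v : Fin (N+1) → Polynomial ℝ) :
    dgR N xs θ (w1 + w2) v = dgR N xs θ w1 v + dgR N xs θ w2 v := by
  unfold dgR
  have h1 : (∑ j : Fin (N+1), ∫ x in (xs j.val)..(xs (j.val + 1)),
        ((w1 + w2) j).eval x * ((v j).derivative.eval x))
      = (∑ j : Fin (N+1), ∫ x in (xs j.val)..(xs (j.val + 1)),
          (w1 j).eval x * ((v j).derivative.eval x))
        + ∑ j : Fin (N+1), ∫ x in (xs j.val)..(xs (j.val + 1)),
            (w2 j).eval x * ((v j).derivative.eval x) := by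
    rw [← Finset.sum_add_distrib]
    refine Finset.sum_congr rfl fun j _ => ?_
    rw [← intervalIntegral.integral_add]
    · apply intervalIntegral.integral_congr; intro x _
      simp [Pi.add_apply, Polynomial.eval_add]; ring
    · simpa using polyII (w1 j * (v j).derivative) _ _
    · simpa using polyII (w2 j * (v j).derivative) _ _
  have h2 : (∑ j : Fin (N+1), flux N xs θ (w1 + w2) j * jump N xs v j)
      = (∑ j : Fin (N+1), flux N xs θ w1 j * jump N xs v j)
        + ∑ j : Fin (N+1), flux N xs θ w2 j * jump N xs v j := by
    rw [← Finset.sum_add_distrib]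
    refine Finset.sum_congr rfl fun j _ => ?_
    rw [flux_add]; ring
  rw [h1, h2]; ring

lemma dgR_smul (θ c : ℝ) (w v : Fin (N+1) → Polynomial ℝ) :
    dgR N xs θ (c • w) v = c * dgR N xs θ w v := by
  unfold dgR
  have h1 : (∑ j : Fin (N+1), ∫ x in (xs j.val)..(xs (j.val + 1)),
        ((c • w) j).eval x * ((v j).derivative.eval x))
      = c * ∑ j : Fin (N+1), ∫ x in (xs j.val)..(xs (j.val + 1)),
          (w j).eval x * ((v j).derivative.eval x) := by
    rw [Finset.mul_sum]
    refine Finset.sum_congr rfl fun j _ => ?_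
    rw [← intervalIntegral.integral_const_mul]
    apply intervalIntegral.integral_congr; intro x _
    simp [Pi.smul_apply, Polynomial.eval_smul, smul_eq_mul]; ring
  have h2 : (∑ j : Fin (N+1), flux N xs θ (c • w) j * jump N xs v j)
      = c * ∑ j : Fin (N+1), flux N xs θ w j * jump N xs v j := by
    rw [Finset.mul_sum]
    refine Finset.sum_congr rfl fun j _ => ?_
    rw [flux_smul]; ring
  rw [h1, h2]; ring

end DGaux


/-- For `θ ≠ 1/2` the DG derivative operator `D_{h,θ}` maps the mean-zero subspace
`Z_h` into itself, is a bijection on `Z_h`, and its inverse is bounded: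
`‖D_{h,θ}⁻¹ z_h‖ ≤ C ‖z_h‖` for all `z_h ∈ Z_h`, with `C` independent of `z_h`. -/
theorem dg_inverse_bounded (k N : ℕ) (xs : ℕ → ℝ) (hxs : StrictMono xs)
    (θ : ℝ) (hθ : θ ≠ 1/2)
    (D : (Fin (N+1) → Polynomial ℝ) → (Fin (N+1) → Polynomial ℝ))
    (hD : ∀ w, memVh k N w → memVh k N (D w) ∧ DGform k N xs θ w (D w)) :
    (∀ z ∈ Zh k N xs, D z ∈ Zh k N xs) ∧
    Set.BijOn D (Zh k N xs) (Zh k N xs) ∧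
    ∃ C : ℝ, ∀ z ∈ Zh k N xs, ∀ y ∈ Zh k N xs, D y = z →
      Real.sqrt (ip N xs y y) ≤ C * Real.sqrt (ip N xs z z) := by
  have hDmem : ∀ w, memVh k N w → memVh k N (D w) := fun w h => (hD w h).1
  have hDform : ∀ w, memVh k N w → ∀ v, memVh k N v →
      ip N xs (D w) v = DGaux.dgR N xs θ w v := fun w h => (hD w h).2
  have hDadd : ∀ w1 w2, memVh k N w1 → memVh k N w2 → D (w1 + w2) = D w1 + D w2 := by
    intro w1 w2 h1 h2
    refine DGaux.Vh_unique hxs (hDmem _ (DGaux.memVh_add h1 h2))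
      (DGaux.memVh_add (hDmem _ h1) (hDmem _ h2)) fun v hv => ?_
    rw [hDform _ (DGaux.memVh_add h1 h2) v hv, DGaux.dgR_add,
      DGaux.ip_add_left, hDform _ h1 v hv, hDform _ h2 v hv]
  have hDsmul : ∀ (c : ℝ) w, memVh k N w → D (c • w) = c • D w := by
    intro c w h
    refine DGaux.Vh_unique hxs (hDmem _ (DGaux.memVh_smul c h))
      (DGaux.memVh_smul c (hDmem _ h)) fun v hv => ?_
    rw [hDform _ (DGaux.memVh_smul c h) v hv, DGaux.dgR_smul,
      DGaux.ip_smul_left, hDform _ h v hv]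
  have hmaps : ∀ z ∈ Zh k N xs, D z ∈ Zh k N xs := by
    intro z hz
    refine ⟨hDmem z hz.1, ?_⟩
    have h := (hD z hz.1).2 (fun _ => 1) (DGaux.memVh_one k)
    have hj : ∀ j : Fin (N+1), jump N xs (fun _ => (1 : Polynomial ℝ)) j = 0 := by
      intro j; unfold jump rightT leftT; simp
    simp only [Polynomial.derivative_one, Polynomial.eval_zero, mul_zero,
      intervalIntegral.integral_zero, Finset.sum_const_zero, neg_zero, zero_sub] at h
    rw [h]
    simp [hj]
  have hinjOn : ∀ y ∈ Zh k N xs, ∀ y' ∈ Zh k N xs, D y = D y' → y = y' := by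
    intro y hy y' hy' he
    have hsplit : y - y' = y + (-1 : ℝ) • y' := by
      rw [neg_one_smul, sub_eq_add_neg]
    have hDsub : D (y - y') = 0 := by
      rw [hsplit, hDadd _ _ hy.1 (DGaux.memVh_smul _ hy'.1), hDsmul _ _ hy'.1, he,
        neg_one_smul]
      exact add_neg_cancel _
    have hmem := DGaux.memVh_sub hy.1 hy'.1
    have hform : DGform k N xs θ (y - y') 0 := by
      have := (hD _ hmem).2
      rwa [hDsub] at this
    have hmean : ip N xs (y - y') (fun _ => 1) = 0 := by
      rw [DGaux.ip_sub_left, hy.2, hy'.2, sub_zero]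
    exact sub_eq_zero.mp (DGaux.dg_kernel hxs hθ hmem hform hmean)
  have main : Set.BijOn D (Zh k N xs) (Zh k N xs) ∧
      ∃ C : ℝ, ∀ z ∈ Zh k N xs, ∀ y ∈ Zh k N xs, D y = z →
        Real.sqrt (ip N xs y y) ≤ C * Real.sqrt (ip N xs z z) := by
    let Zs : Submodule ℝ (Fin (N+1) → Polynomial ℝ) :=
      { carrier := Zh k N xs
        add_mem' := fun ha hb => ⟨DGaux.memVh_add ha.1 hb.1,
          by rw [DGaux.ip_add_left, ha.2, hb.2, add_zero]⟩
        zero_mem' := ⟨DGaux.memVh_zero k, DGaux.ip_zero_left _⟩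
        smul_mem' := fun c a ha => ⟨DGaux.memVh_smul c ha.1,
          by rw [DGaux.ip_smul_left, ha.2, mul_zero]⟩ }
    let coeffs : Zs →ₗ[ℝ] (Fin (N+1) → Fin (k+1) → ℝ) :=
      { toFun := fun z j i => (z.1 j).coeff i.val
        map_add' := fun a b => by
          funext j i
          simp [Polynomial.coeff_add]
        map_smul' := fun c a => by
          funext j i
          simp [Polynomial.coeff_smul] }
    have hcoeffs_inj : Function.Injective coeffs := by
      intro a b hab
      apply Subtype.ext
      funext j
      apply Polynomial.ext
      intro n
      by_cases hn : n ≤ k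
      · have := congrFun (congrFun hab j) ⟨n, Nat.lt_succ_of_le hn⟩
        simpa [coeffs] using this
      · push_neg at hn
        rw [Polynomial.coeff_eq_zero_of_natDegree_lt (lt_of_le_of_lt (a.2.1 j) hn),
          Polynomial.coeff_eq_zero_of_natDegree_lt (lt_of_le_of_lt (b.2.1 j) hn)]
    haveI : FiniteDimensional ℝ Zs := FiniteDimensional.of_injective coeffs hcoeffs_inj
    let f : Zs →ₗ[ℝ] Zs :=
      { toFun := fun z => ⟨D z.1, hmaps z.1 z.2⟩
        map_add' := fun a b => Subtype.ext (hDadd a.1 b.1 a.2.1 b.2.1)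
        map_smul' := fun c a => Subtype.ext (hDsmul c a.1 a.2.1) }
    have hfinj : Function.Injective f := fun a b hab =>
      Subtype.ext (hinjOn a.1 a.2 b.1 b.2 (congrArg Subtype.val hab))
    have hfsurj : Function.Surjective f := (LinearMap.injective_iff_surjective).mp hfinj
    let e : Zs ≃ₗ[ℝ] Zs := LinearEquiv.ofBijective f ⟨hfinj, hfsurj⟩
    constructor
    · -- BijOn
      refine ⟨hmaps, fun a ha b hb h => hinjOn a ha b hb h, ?_⟩
      intro z hz
      exact ⟨(e.symm ⟨z, hz⟩).1, (e.symm ⟨z, hz⟩).2,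
        congrArg Subtype.val (e.apply_symm_apply ⟨z, hz⟩)⟩
    · -- bound
      letI instCore : InnerProductSpace.Core ℝ Zs :=
        { inner := fun x y => ip N xs x.1 y.1
          conj_inner_symm := fun x y => by simpa using DGaux.ip_comm y.1 x.1
          re_inner_nonneg := fun x => by simpa using DGaux.ip_self_nonneg hxs x.1
          add_left := fun x y z => DGaux.ip_add_left x.1 y.1 z.1
          smul_left := fun x y r => by simpa using DGaux.ip_smul_left r x.1 y.1
          definite := fun x hx => Subtype.ext (DGaux.ip_self_eq_zero hxs x.1 hx) }
      letI : NormedAddCommGroup Zs := instCore.toNormedAddCommGroup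
      letI : InnerProductSpace ℝ Zs := InnerProductSpace.ofCore instCore.toCore
      let g : Zs →L[ℝ] Zs := LinearMap.toContinuousLinearMap e.symm.toLinearMap
      have hnorm : ∀ x : Zs, ‖x‖ = Real.sqrt (ip N xs x.1 x.1) := fun x => by
        rw [norm_eq_sqrt_real_inner]
        rfl
      refine ⟨‖g‖, ?_⟩
      intro z hz y hy hDy
      have hy' : (⟨y, hy⟩ : Zs) = e.symm ⟨z, hz⟩ := by
        apply e.injective
        rw [e.apply_symm_apply]
        exact Subtype.ext hDy
      have hb := g.le_opNorm ⟨z, hz⟩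
      have hg : g ⟨z, hz⟩ = (⟨y, hy⟩ : Zs) := by
        rw [hy']
        rfl
      rw [hg, hnorm, hnorm] at hb
      exact hb
  exact ⟨hmaps, main.1, main.2⟩
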